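/- Let α ∈ 𝔻 \ {0} and let T_α on ℓ²(ℕ) be the weighted shift T_α(a₀,a₁,...) = (0, αa₀, a₁, a₂, ...), R₁ = T_α, R₃ = T_α², and 𝒜 = SOT-lim R₃*ⁿR₃ⁿ. Then 𝒜(a₀,a₁,a₂,...) = (|α|²a₀, a₁, a₂, ...), and D_{R₃*} R₁ 𝒜 ≠ D_{R₃*} 𝒜 R₁. -/

import Mathlib

set_option maxHeartbeats 1000000


open ContinuousLinearMap
open scoped ComplexInnerProductSpace

/-- Let `α ∈ 𝔻 \ {0}`, `T_α` the weighted shift `T_α(a₀,a₁,...) = (0, αa₀, a₁, ...)` on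
`ℓ²(ℕ)`, `R₁ = T_α`, `R₃ = T_α²`, and `𝒜 = SOT-lim R₃*ⁿ R₃ⁿ`.  Then
`𝒜(a₀,a₁,a₂,...) = (|α|² a₀, a₁, a₂, ...)` and `D_{R₃*} R₁ 𝒜 ≠ D_{R₃*} 𝒜 R₁`. -/
theorem weighted_shift_asymptotic_counterexample (α : ℂ) (hα0 : α ≠ 0) (hα : ‖α‖ < 1)
    (T A Ds : lp (fun _ : ℕ => ℂ) 2 →L[ℂ] lp (fun _ : ℕ => ℂ) 2)
    (hT0 : ∀ a, T a 0 = 0)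
    (hT1 : ∀ a, T a 1 = α * a 0)
    (hTn : ∀ a (n : ℕ), T a (n + 2) = a (n + 1))
    (hA : ∀ x, Filter.Tendsto
      (fun n : ℕ => (((adjoint (T ∘L T)) ^ n) ∘L ((T ∘L T) ^ n)) x)
      Filter.atTop (nhds (A x)))
    (hDs : Ds.IsPositive)
    (hDs2 : Ds ∘L Ds = 1 - (T ∘L T) ∘L adjoint (T ∘L T)) :
    (∀ a, A a 0 = (‖α‖ ^ 2 : ℂ) * a 0) ∧
    (∀ a (n : ℕ), A a (n + 1) = a (n + 1)) ∧
    Ds ∘L T ∘L A ≠ Ds ∘L A ∘L T := by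
  classical
  set H := lp (fun _ : ℕ => ℂ) 2 with hHdef
  set R : H →L[ℂ] H := T ∘L T with hRdef
  -- basis vectors
  set e : ℕ → H := fun n => lp.single 2 n (1 : ℂ) with hedef
  -- components of R
  have hR0 : ∀ a : H, R a 0 = 0 := fun a => hT0 _
  have hR1 : ∀ a : H, R a 1 = 0 := by
    intro a; show T (T a) 1 = 0; rw [hT1, hT0, mul_zero]
  have hR2 : ∀ a : H, R a 2 = α * a 0 := by
    intro a; show T (T a) 2 = _; rw [hTn, hT1]
  have hR3 : ∀ (a : H) (n : ℕ), R a (n + 3) = a (n + 1) := by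
    intro a n; show T (T a) (n + 3) = _
    rw [show n + 3 = (n + 1) + 2 from rfl, hTn, hTn]
  -- coordinates via inner product
  have hcoord : ∀ (v : H) (n : ℕ), ⟪e n, v⟫ = v n := by
    intro v n
    rw [hedef]
    rw [lp.inner_single_left, RCLike.inner_apply, map_one, mul_one]
  -- R on basis vectors
  have hRe0 : R (e 0) = α • e 2 := by
    apply lp.ext; funext n
    have hs : (α • e 2 : H) n = α * (e 2) n := by rw [lp.coeFn_smul]; rfl
    rcases n with _ | _ | _ | n
    · rw [hR0 _, hs, lp.single_apply_ne 2 2 _ (by decide), mul_zero]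
    · rw [hR1 _, hs, lp.single_apply_ne 2 2 _ (by decide), mul_zero]
    · rw [hR2 _, hs, lp.single_apply_self, lp.single_apply_self]
    · rw [hR3 _ _, hs, lp.single_apply_ne 2 2 _ (by omega),
        lp.single_apply_ne 2 0 _ (by omega), mul_zero]
  have hRe : ∀ n : ℕ, R (e (n + 1)) = e (n + 3) := by
    intro m
    apply lp.ext; funext n
    rcases n with _ | _ | _ | n
    · rw [hR0 _, lp.single_apply_ne 2 (m + 3) _ (by omega)]
    · rw [hR1 _, lp.single_apply_ne 2 (m + 3) _ (by omega)]
    · rw [hR2 _, lp.single_apply_ne 2 (m + 3) _ (by omega),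
        lp.single_apply_ne 2 (m + 1) _ (by omega), mul_zero]
    · rw [hR3 _ _]
      by_cases h : n = m
      · subst h; rw [lp.single_apply_self, lp.single_apply_self]
      · rw [lp.single_apply_ne 2 (m + 1) _ (by omega),
          lp.single_apply_ne 2 (m + 3) _ (by omega)]
  -- components of S = R* R
  have hS0 : ∀ v : H, adjoint R (R v) 0 = (‖α‖ ^ 2 : ℂ) * v 0 := by
    intro v
    rw [← hcoord (adjoint R (R v)) 0, adjoint_inner_right, hRe0, inner_smul_left,
      hcoord _ 2, hR2]
    rw [← mul_assoc, RCLike.conj_mul]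
    norm_cast
  have hSn : ∀ (v : H) (n : ℕ), adjoint R (R v) (n + 1) = v (n + 1) := by
    intro v n
    rw [← hcoord (adjoint R (R v)) (n + 1), adjoint_inner_right, hRe n,
      hcoord _ (n + 3), hR3]
  -- S (R v) = R v
  have hSR : ∀ v : H, adjoint R (R (R v)) = R v := by
    intro v
    apply lp.ext; funext n
    rcases n with _ | n
    · rw [hS0 (R v), hR0 v, mul_zero]
    · rw [hSn (R v) n]
  -- constancy of the sequence
  have hpow : ∀ (n : ℕ) (x : H), ((adjoint R) ^ (n + 1)) ((R ^ (n + 1)) x)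
      = adjoint R (R x) := by
    intro n
    induction n with
    | zero => intro x; simp [pow_one]
    | succ n ih =>
      intro x
      have h1 : (R ^ (n + 2)) x = R ((R ^ (n + 1)) x) := by
        rw [pow_succ' R (n + 1)]; rfl
      have h2 : ∀ w, ((adjoint R) ^ (n + 2)) w
          = ((adjoint R) ^ (n + 1)) (adjoint R w) := by
        intro w; rw [pow_succ (adjoint R) (n + 1)]; rfl
      have h3 : (R ^ (n + 1)) x = R ((R ^ n) x) := by
        rw [pow_succ' R n]; rfl
      rw [h1, h2, h3, hSR ((R ^ n) x), ← h3, ih x]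
  -- A equals S
  have hAS : ∀ x : H, A x = adjoint R (R x) := by
    intro x
    refine tendsto_nhds_unique (hA x) ?_
    refine Filter.Tendsto.congr' ?_ (tendsto_const_nhds (x := adjoint R (R x)))
    filter_upwards [Filter.eventually_ge_atTop 1] with n hn
    obtain ⟨m, rfl⟩ := Nat.exists_eq_add_of_le hn
    have h5 : (((adjoint R) ^ (1 + m)) ∘L (R ^ (1 + m))) x = adjoint R (R x) := by
      rw [comp_apply, Nat.add_comm 1 m]
      exact hpow m x
    exact h5.symm
  have hA0 : ∀ a : H, A a 0 = (‖α‖ ^ 2 : ℂ) * a 0 := by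
    intro a; rw [hAS a]; exact hS0 a
  have hA1 : ∀ (a : H) (n : ℕ), A a (n + 1) = a (n + 1) := by
    intro a n; rw [hAS a]; exact hSn a n
  refine ⟨hA0, hA1, ?_⟩
  -- the counterexample at e 0
  intro hcon
  have hAe0 : A (e 0) = (‖α‖ ^ 2 : ℂ) • e 0 := by
    apply lp.ext; funext n
    have hs : ((‖α‖ ^ 2 : ℂ) • e 0 : H) n = (‖α‖ ^ 2 : ℂ) * (e 0) n := by
      rw [lp.coeFn_smul]; rfl
    rcases n with _ | n
    · rw [hA0 (e 0), hs]
    · rw [hA1 (e 0) n, hs, lp.single_apply_ne 2 0 _ (by omega), mul_zero]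
  have hATe0 : A (T (e 0)) = T (e 0) := by
    apply lp.ext; funext n
    rcases n with _ | n
    · rw [hA0 (T (e 0)), hT0, mul_zero]
    · rw [hA1 (T (e 0)) n]
  have happ := DFunLike.congr_fun hcon (e 0)
  simp only [comp_apply] at happ
  rw [hAe0, hATe0, map_smul, map_smul] at happ
  -- happ : (‖α‖^2 : ℂ) • Ds (T (e 0)) = Ds (T (e 0))
  have hne1 : (‖α‖ ^ 2 : ℂ) - 1 ≠ 0 := by
    intro h
    have h2 : (‖α‖ ^ 2 : ℂ) = 1 := by linear_combination h
    have h3 : (‖α‖ : ℝ) ^ 2 = 1 := by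
      exact_mod_cast h2
    nlinarith [norm_nonneg α]
  have hDsT : Ds (T (e 0)) = 0 := by
    have : ((‖α‖ ^ 2 : ℂ) - 1) • Ds (T (e 0)) = 0 := by
      rw [sub_smul, one_smul, happ, sub_self]
    rcases smul_eq_zero.mp this with h | h
    · exact absurd h hne1
    · exact h
  have hDs2' := DFunLike.congr_fun hDs2 (T (e 0))
  simp only [comp_apply, sub_apply, one_apply] at hDs2'
  rw [hDsT, map_zero] at hDs2'
  -- hDs2' : 0 = T (e 0) - R (adjoint R (T (e 0)))
  have hTe : T (e 0) = R (adjoint R (T (e 0))) := by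
    have := hDs2'.symm
    rw [sub_eq_zero] at this
    exact this
  have hc1 : (T (e 0) : ∀ n : ℕ, ℂ) 1 = (R (adjoint R (T (e 0))) : ∀ n : ℕ, ℂ) 1 := by
    rw [← hTe]
  rw [hT1, lp.single_apply_self, mul_one, hR1] at hc1
  exact hα0 hc1
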